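/- Let N be a phylogenetic network on X, let T be a rooted binary phylogenetic X-tree displayed by N, let {a,b} be a cherry of T, and suppose there is a tree path in N from the parent p_i of a leaf i ∈ {a,b} to a leaf ℓ ∉ {a,b}. If p_i is a tree vertex whose other child begins this tree path, then N does not display T. (Equivalently: any rooted binary phylogenetic X-tree embedded in N must display the rooted triple iℓ|j where {i,j}={a,b}, contradicting that {a,b} is a cherry of T.) -/

import Mathlib

/-- A directed graph with a distinguished vertex set, arc set and root,
intended to model (binary) phylogenetic networks. Since arcs form a
`Finset` of ordered pairs, there are no parallel arcs. -/
structure Net (V : Type) [DecidableEq V] where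
  verts : Finset V
  arcs : Finset (V × V)
  root : V

variable {V : Type} [DecidableEq V]

namespace Net

def Arc (N : Net V) (u v : V) : Prop := (u, v) ∈ N.arcs

def outdeg (N : Net V) (v : V) : ℕ := (N.arcs.filter (fun e => e.1 = v)).card

def indeg (N : Net V) (v : V) : ℕ := (N.arcs.filter (fun e => e.2 = v)).card

def IsLeaf (N : Net V) (v : V) : Prop := v ∈ N.verts ∧ N.outdeg v = 0

def IsRetic (N : Net V) (v : V) : Prop :=
  v ∈ N.verts ∧ N.indeg v = 2 ∧ N.outdeg v = 1

def IsTreeVtx (N : Net V) (v : V) : Prop :=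
  v ∈ N.verts ∧ N.indeg v = 1 ∧ N.outdeg v = 2

/-- The set of leaves (out-degree-zero vertices); this is the taxa set `X`. -/
def leaves (N : Net V) : Finset V := N.verts.filter (fun v => N.outdeg v = 0)

/-- The set of reticulation vertices. -/
def retics (N : Net V) : Finset V :=
  N.verts.filter (fun v => N.indeg v = 2 ∧ N.outdeg v = 1)

/-- `u` is an ancestor of `v`: there is a directed path from `u` to `v`.
(Reflexive, as in the reachability order.) -/
def Ancestor (N : Net V) (u v : V) : Prop := Relation.ReflTransGen N.Arc u v

/-- `IsPathList N u v l` : `l` is the list of vertices of a directed path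
from `u` to `v` in `N`. -/
inductive IsPathList (N : Net V) : V → V → List V → Prop
  | nil (v : V) : IsPathList N v v [v]
  | cons {u w x : V} {l : List V} : N.Arc u w → IsPathList N w x l →
      IsPathList N u x (u :: l)

/-- The leaf `ℓ` verifies the vertex `v`: every directed path from the root
to `ℓ` passes through `v`. -/
def Verifies (N : Net V) (ℓ v : V) : Prop :=
  ∀ l : List V, N.IsPathList N.root ℓ l → v ∈ l

def Visible (N : Net V) (v : V) : Prop := ∃ ℓ, N.IsLeaf ℓ ∧ N.Verifies ℓ v

def ReticVisible (N : Net V) : Prop := ∀ v, N.IsRetic v → N.Visible v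

/-- `N` is a (binary) phylogenetic network: a rooted acyclic digraph with no
parallel arcs in which the root has in-degree zero and out-degree two, every
other vertex is a leaf (in-degree one, out-degree zero), a tree vertex
(in-degree one, out-degree two) or a reticulation (in-degree two, out-degree
one); if there is a single vertex the network has no arcs. -/
def IsPhylo (N : Net V) : Prop :=
  N.root ∈ N.verts ∧
  (∀ e ∈ N.arcs, e.1 ∈ N.verts ∧ e.2 ∈ N.verts) ∧
  (∀ v : V, ¬ Relation.TransGen N.Arc v v) ∧
  (∀ v ∈ N.verts, N.Ancestor N.root v) ∧
  (if N.verts.card = 1 then N.arcs = ∅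
   else
    N.indeg N.root = 0 ∧ N.outdeg N.root = 2 ∧
    ∀ v ∈ N.verts, v ≠ N.root →
      (N.indeg v = 1 ∧ N.outdeg v = 0) ∨
      (N.indeg v = 1 ∧ N.outdeg v = 2) ∨
      (N.indeg v = 2 ∧ N.outdeg v = 1))

end Net

/-- The internal vertices of a path given as a list of vertices. -/
def internalVerts {V : Type} (l : List V) : List V := (l.drop 1).dropLast

/-- `N.Displays T corr` : some subgraph of `N` is a subdivision of `T`; it is
witnessed by an embedding `f` of the vertices of `T` into `N` (with each leaf
`w` of `T` sent to a vertex related to it by the leaf correspondence `corr`)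
together with, for every arc `e` of `T`, a directed path `P e` in `N` joining
the images of its endpoints, these paths being internally disjoint from one
another and from the images of the vertices of `T`. -/
def Net.Displays {V W : Type} [DecidableEq V] [DecidableEq W]
    (N : Net V) (T : Net W) (corr : W → V → Prop) : Prop :=
  ∃ (f : W → V) (P : W × W → List V),
    Set.InjOn f {w | w ∈ T.verts} ∧
    (∀ w, T.IsLeaf w → corr w (f w)) ∧
    (∀ e ∈ T.arcs, N.IsPathList (f e.1) (f e.2) (P e) ∧ 2 ≤ (P e).length) ∧
    (∀ e ∈ T.arcs, ∀ x ∈ internalVerts (P e), ∀ w ∈ T.verts, f w ≠ x) ∧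
    (∀ e ∈ T.arcs, ∀ e' ∈ T.arcs, e ≠ e' →
      ∀ x ∈ internalVerts (P e), x ∉ internalVerts (P e'))

/-- `c` is a bijective correspondence between the leaves of `T` and the
leaves of `N` (both leaf sets being labelled by the same taxa set `X`). -/
def LeafCorr {V W : Type} [DecidableEq V] [DecidableEq W]
    (T : Net W) (N : Net V) (c : W → V) : Prop :=
  (∀ w, T.IsLeaf w → N.IsLeaf (c w)) ∧
  (∀ w w', T.IsLeaf w → T.IsLeaf w' → c w = c w' → w = w') ∧
  (∀ v, N.IsLeaf v → ∃ w, T.IsLeaf w ∧ c w = v)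

/-- A tree path: a directed path in which every vertex except possibly the
first one is a tree vertex or a leaf. -/
def Net.IsTreePath {V : Type} [DecidableEq V] (N : Net V)
    (u v : V) (l : List V) : Prop :=
  N.IsPathList u v l ∧ ∀ x ∈ l.drop 1, N.IsTreeVtx x ∨ N.IsLeaf x

section Aux

variable {V : Type} [DecidableEq V] {M : Net V}

lemma path_head {u v : V} {q : List V} (h : M.IsPathList u v q) :
    ∃ t, q = u :: t := by
  cases h with
  | nil => exact ⟨[], rfl⟩
  | cons h1 h2 => exact ⟨_, rfl⟩

lemma path_ne_nil {u v : V} {q : List V} (h : M.IsPathList u v q) : q ≠ [] := by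
  obtain ⟨t, rfl⟩ := path_head h; simp

lemma path_singleton {u v a : V} (h : M.IsPathList u v [a]) : u = a ∧ v = a := by
  cases h with
  | nil => exact ⟨rfl, rfl⟩
  | cons h1 h2 => exact absurd rfl (path_ne_nil h2)

lemma path_last_mem {u v : V} {q : List V} (h : M.IsPathList u v q) : v ∈ q := by
  induction h with
  | nil => simp
  | cons h1 h2 ih => exact List.mem_cons_of_mem _ ih

lemma path_reaches_of_mem {u v z : V} {q : List V} (h : M.IsPathList u v q)
    (hz : z ∈ q) : Relation.ReflTransGen M.Arc u z := by
  induction h with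
  | nil => simp at hz; subst hz; exact Relation.ReflTransGen.refl
  | cons h1 h2 ih =>
    rcases List.mem_cons.mp hz with rfl | hz
    · exact Relation.ReflTransGen.refl
    · exact Relation.ReflTransGen.head h1 (ih hz)

lemma mem_reaches_last' {u v : V} {q : List V} (h : M.IsPathList u v q) :
    ∀ z ∈ q, Relation.ReflTransGen M.Arc z v := by
  induction h with
  | nil => intro z hz; simp at hz; subst hz; exact Relation.ReflTransGen.refl
  | cons h1 h2 ih =>
    intro z hz
    rcases List.mem_cons.mp hz with rfl | hz
    · obtain ⟨t, rfl⟩ := path_head h2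
      exact Relation.ReflTransGen.head h1 (ih _ (List.mem_cons_self))
    · exact ih _ hz

lemma mem_reaches_last {u v z : V} {q : List V} (h : M.IsPathList u v q)
    (hz : z ∈ q) : Relation.ReflTransGen M.Arc z v :=
  mem_reaches_last' h z hz

lemma path_pred {u v z : V} {q : List V} (h : M.IsPathList u v q)
    (hz : z ∈ q.drop 1) : ∃ y ∈ q, M.Arc y z := by
  induction h with
  | nil => simp at hz
  | @cons u' w' x' l' h1 h2 ih =>
    simp only [List.drop_one, List.tail_cons] at hz
    obtain ⟨t, rfl⟩ := path_head h2
    rcases List.mem_cons.mp hz with rfl | hz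
    · exact ⟨u', List.mem_cons_self, h1⟩
    · obtain ⟨y, hy, hyz⟩ := ih (by simpa using hz)
      exact ⟨y, List.mem_cons_of_mem _ hy, hyz⟩

lemma indeg_one_unique {w a b : V} (h : M.indeg w = 1) (ha : M.Arc a w)
    (hb : M.Arc b w) : a = b := by
  have := Finset.card_le_one.mp (le_of_eq h) (a, w)
    (Finset.mem_filter.mpr ⟨ha, rfl⟩) (b, w) (Finset.mem_filter.mpr ⟨hb, rfl⟩)
  exact congrArg Prod.fst this

lemma path_snoc {u v w : V} {q : List V} (h : M.IsPathList u v q)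
    (ha : M.Arc v w) : M.IsPathList u w (q ++ [w]) := by
  induction h with
  | nil v => exact Net.IsPathList.cons ha (Net.IsPathList.nil w)
  | cons h1 h2 ih => exact Net.IsPathList.cons h1 (ih ha)

lemma reaches_path {u v : V} (h : Relation.ReflTransGen M.Arc u v) :
    ∃ q, M.IsPathList u v q := by
  induction h with
  | refl => exact ⟨[u], Net.IsPathList.nil u⟩
  | tail hab harc ih =>
    obtain ⟨q, hq⟩ := ih
    exact ⟨q ++ [_], path_snoc hq harc⟩

lemma path_decomp_last {u v : V} {q : List V} (h : M.IsPathList u v q)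
    (hlen : 2 ≤ q.length) :
    ∃ z q', M.IsPathList u z q' ∧ M.Arc z v ∧ q = q' ++ [v] ∧ z ∈ q' := by
  induction h with
  | nil => simp at hlen
  | @cons u' w' x' l' h1 h2 ih =>
    obtain ⟨t, rfl⟩ := path_head h2
    cases t with
    | nil =>
      obtain ⟨h3, h4⟩ := path_singleton h2
      subst h4
      exact ⟨u', [u'], Net.IsPathList.nil u', h1, rfl, List.mem_cons_self⟩
    | cons a t' =>
      obtain ⟨z, q', hp, harc, heq, hzm⟩ := ih (by simp)
      refine ⟨z, u' :: q', Net.IsPathList.cons h1 hp, harc, ?_, List.mem_cons_of_mem _ hzm⟩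
      rw [heq]; rfl

lemma internal_cases {u v z : V} {q : List V} (h : M.IsPathList u v q)
    (hz : z ∈ q) : z = u ∨ z = v ∨ z ∈ internalVerts q := by
  induction h with
  | nil => simp at hz; tauto
  | @cons u' w' x' l' h1 h2 ih =>
    rcases List.mem_cons.mp hz with rfl | hz
    · exact Or.inl rfl
    · rcases ih hz with rfl | rfl | hint
      · obtain ⟨t, rfl⟩ := path_head h2
        cases t with
        | nil => exact Or.inr (Or.inl (path_singleton h2).2.symm)
        | cons a t' =>
          refine Or.inr (Or.inr ?_)
          simp [internalVerts]
      · exact Or.inr (Or.inl rfl)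
      · refine Or.inr (Or.inr ?_)
        obtain ⟨t, rfl⟩ := path_head h2
        simp only [internalVerts, List.drop_one, List.tail_cons] at hint ⊢
        revert hint
        cases t with
        | nil => simp
        | cons a t' =>
          intro hint
          simp only [List.dropLast_cons₂]
          exact List.mem_cons_of_mem _ hint

lemma arc_indeg_pos {a w : V} (ha : M.Arc a w) : 0 < M.indeg w :=
  Finset.card_pos.mpr ⟨(a, w), Finset.mem_filter.mpr ⟨ha, rfl⟩⟩

lemma arc_outdeg_pos {a w : V} (ha : M.Arc a w) : 0 < M.outdeg a :=
  Finset.card_pos.mpr ⟨(a, w), Finset.mem_filter.mpr ⟨ha, rfl⟩⟩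

lemma no_arc_of_outdeg_zero {a w : V} (h : M.outdeg a = 0) (ha : M.Arc a w) :
    False := by
  have := arc_outdeg_pos ha; omega

end Aux

/-- Let `{a, b}` (leaves `wa, wb` of `T` with common parent `wt`) be a cherry
of the rooted binary phylogenetic `X`-tree `T`.  If in `N` the parent `pᵢ` of
the leaf `c wa` is a tree vertex whose other child `x` begins a tree path to
a leaf `ℓ'` distinct from the leaves corresponding to `wa` and `wb`, then `N`
does not display `T`. -/
theorem stmt_16 {V W : Type} [DecidableEq V] [DecidableEq W]
    (N : Net V) (T : Net W) (c : W → V)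
    (hN : N.IsPhylo) (hT : T.IsPhylo) (hTtree : T.retics = ∅)
    (hc : LeafCorr T N c)
    (wa wb wt : W)
    (hwa : T.IsLeaf wa) (hwb : T.IsLeaf wb) (hwab : wa ≠ wb)
    (hwta : T.Arc wt wa) (hwtb : T.Arc wt wb)
    (pᵢ x ℓ' : V) (l : List V)
    (hpi : N.IsTreeVtx pᵢ) (hpia : N.Arc pᵢ (c wa))
    (hpix : N.Arc pᵢ x) (hxne : x ≠ c wa)
    (htp : N.IsTreePath pᵢ ℓ' (pᵢ :: x :: l))
    (hℓ : N.IsLeaf ℓ') (hℓa : ℓ' ≠ c wa) (hℓb : ℓ' ≠ c wb) :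
    ¬ N.Displays T (fun w v => v = c w) := by
  intro hdisp
  obtain ⟨f, P, hinj, hleaf, hpaths, hint, hdisj⟩ := hdisp
  obtain ⟨hNroot, hNends, hNacyc, hNanc, hNif⟩ := hN
  obtain ⟨hTroot, hTends, hTacyc, hTanc, hTif⟩ := hT
  have hcardN : ¬ N.verts.card = 1 := by
    intro h
    rw [if_pos h] at hNif
    have : (pᵢ, c wa) ∈ N.arcs := hpia
    rw [hNif] at this
    exact absurd this (Finset.notMem_empty _)
  have hcardT : ¬ T.verts.card = 1 := by
    intro h
    rw [if_pos h] at hTif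
    have : (wt, wa) ∈ T.arcs := hwta
    rw [hTif] at this
    exact absurd this (Finset.notMem_empty _)
  rw [if_neg hcardN] at hNif
  obtain ⟨hNr0, hNr2, hNclass⟩ := hNif
  rw [if_neg hcardT] at hTif
  obtain ⟨hTr0, hTr2, hTclass⟩ := hTif
  -- the tree path from x to ℓ'
  have hx : N.IsPathList x ℓ' (x :: l) := by
    cases htp.1 with
    | cons h1 h2 =>
      obtain ⟨t, ht⟩ := path_head h2
      cases ht
      exact h2
  -- every vertex that is a tree vertex or leaf and has an in-arc has in-degree 1
  have leafdeg : ∀ v : V, N.IsTreeVtx v ∨ N.IsLeaf v → (∃ a, N.Arc a v) →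
      N.indeg v = 1 := by
    rintro v hv ⟨a, ha⟩
    rcases hv with h | h
    · exact h.2.1
    · have hpos := arc_indeg_pos ha
      have hvr : v ≠ N.root := by
        intro he; rw [he, hNr0] at hpos; omega
      rcases hNclass v h.1 hvr with ⟨h1, h2⟩ | ⟨h1, h2⟩ | ⟨h1, h2⟩
      · exact h1
      · rw [h.2] at h2; omega
      · rw [h.2] at h2; omega
  have hdeg : ∀ w ∈ x :: l, N.indeg w = 1 := by
    intro w hw
    refine leafdeg w (htp.2 w (by simpa using hw)) ?_
    rcases List.mem_cons.mp hw with rfl | hw'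
    · exact ⟨pᵢ, hpix⟩
    · obtain ⟨y, _, hyz⟩ := path_pred hx (by simpa using hw')
      exact ⟨y, hyz⟩
  -- pᵢ is not on the tree path from x
  have hF : pᵢ ∉ x :: l := by
    intro hmem
    exact hNacyc pᵢ (Relation.TransGen.head' hpix (path_reaches_of_mem hx hmem))
  -- the leaf c wa has in-degree 1 (its parent being pᵢ)
  have hca : N.IsLeaf (c wa) := hc.1 wa hwa
  have hadeg : N.indeg (c wa) = 1 := by
    refine leafdeg (c wa) (Or.inr hca) ⟨pᵢ, hpia⟩
  -- c wa is not on the tree path from x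
  have hF' : c wa ∉ x :: l := by
    intro hmem
    have hne : ¬ c wa = x := fun he => hxne he.symm
    have hmem' : c wa ∈ l := by
      rcases List.mem_cons.mp hmem with he | hm
      · exact absurd he hne
      · exact hm
    obtain ⟨y, hy, hyz⟩ := path_pred hx (by simpa using hmem')
    have : y = pᵢ := indeg_one_unique hadeg hyz hpia
    exact hF (this ▸ hy)
  -- c wb is not on the tree path from x
  have hF'' : c wb ∉ x :: l := by
    intro hmem
    rcases (mem_reaches_last hx hmem).cases_head with he | ⟨y, hy1, _⟩
    · exact hℓb he.symm
    · exact no_arc_of_outdeg_zero (hc.1 wb hwb).2 hy1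
  have hfa : f wa = c wa := hleaf wa hwa
  have hfb : f wb = c wb := hleaf wb hwb
  -- the path of the display for the arc (wt, wa) ends with the arc (pᵢ, c wa)
  obtain ⟨hP1, hP1len⟩ := hpaths (wt, wa) hwta
  rw [hfa] at hP1
  obtain ⟨z1, q1, hq1, harc1, heq1, hz1⟩ := path_decomp_last hP1 hP1len
  have hz1p : z1 = pᵢ := indeg_one_unique hadeg harc1 hpia
  subst hz1p
  have hE0 : z1 ∈ P (wt, wa) := by
    rw [heq1]; exact List.mem_append_left _ hz1
  have hE1 : z1 = f wt ∨ z1 ∈ internalVerts (P (wt, wa)) := by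
    obtain ⟨t1, ht1⟩ := path_head hq1
    rw [ht1] at hz1
    rcases List.mem_cons.mp hz1 with he | hm
    · exact Or.inl he
    · right
      rw [heq1, ht1]
      have : internalVerts ((f wt :: t1) ++ [c wa]) = t1 := by
        simp [internalVerts, List.dropLast_concat]
      rw [this]
      exact hm
  -- any path in N ending on the tree path either meets pᵢ or stays on it
  have hcf : ∀ (u w : V) (q : List V), N.IsPathList u w q → w ∈ x :: l →
      z1 ∈ q ∨ ∀ y ∈ q, y ∈ x :: l := by
    intro u w q h
    induction h with
    | nil v =>
      intro hv
      exact Or.inr (by intro y hy; simp at hy; subst hy; exact hv)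
    | @cons u' m w' q' h1 h2 ih =>
      intro hw
      rcases ih hw with hp | hsub
      · exact Or.inl (List.mem_cons_of_mem _ hp)
      · obtain ⟨t, ht⟩ := path_head h2
        have hm : m ∈ x :: l := hsub m (by rw [ht]; exact List.mem_cons_self)
        rcases List.mem_cons.mp hm with he | hml
        · left
          have : u' = z1 := indeg_one_unique (hdeg _ hm) h1 (he ▸ hpix)
          rw [this]
          exact List.mem_cons_self
        · obtain ⟨y, hy, hyz⟩ := path_pred hx (by simpa using hml)
          have huy : u' = y := indeg_one_unique (hdeg _ hm) h1 hyz
          right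
          intro z hz
          rcases List.mem_cons.mp hz with rfl | hz'
          · exact huy ▸ hy
          · exact hsub z hz'
  -- images of T-reachability give N-reachability
  have himg : ∀ (u v : W), Relation.ReflTransGen T.Arc u v →
      Relation.ReflTransGen N.Arc (f u) (f v) := by
    intro u v h
    induction h with
    | refl => exact Relation.ReflTransGen.refl
    | tail hab harc ih =>
      obtain ⟨hp, -⟩ := hpaths _ harc
      exact ih.trans (path_reaches_of_mem hp (path_last_mem hp))
  -- the image of the root of T cannot lie on the tree path from x
  have hroot_case : f T.root ∈ x :: l → False := by
    intro hmem
    have h1 : Relation.ReflTransGen N.Arc (f T.root) (f wt) :=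
      himg _ _ (hTanc wt (hTends (wt, wa) hwta).1)
    have h2 : Relation.ReflTransGen N.Arc (f wt) z1 :=
      path_reaches_of_mem hP1 hE0
    have h3 : Relation.ReflTransGen N.Arc x (f T.root) :=
      path_reaches_of_mem hx hmem
    exact hNacyc z1 (Relation.TransGen.head' hpix (h3.trans (h1.trans h2)))
  -- main induction: no vertex of T maps onto the tree path from x
  have hK : ∀ (n : ℕ) (w : W) (q : List W), T.IsPathList T.root w q →
      q.length ≤ n → w ∈ T.verts → f w ∈ x :: l → False := by
    intro n
    induction n with
    | zero =>
      intro w q hq hlen _ _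
      have h := path_ne_nil hq
      cases q with
      | nil => exact h rfl
      | cons a t => simp at hlen
    | succ n ih =>
      intro w q hq hlen hwv hfw
      by_cases hwr : w = T.root
      · exact hroot_case (hwr ▸ hfw)
      · have hlen2 : 2 ≤ q.length := by
          obtain ⟨t, rfl⟩ := path_head hq
          cases t with
          | nil => exact absurd (path_singleton hq).2 hwr
          | cons a t' => simp
        obtain ⟨z, q', hq', harcz, heqq, hzq⟩ := path_decomp_last hq hlen2
        have hzv : z ∈ T.verts := (hTends (z, w) harcz).1
        obtain ⟨hPe, hPelen⟩ := hpaths (z, w) harcz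
        rcases hcf (f z) (f w) (P (z, w)) hPe hfw with hpmem | hsub
        · rcases internal_cases hPe hpmem with hcase | hcase | hcase
          · -- z1 = f z
            rcases hE1 with hE | hE
            · -- also z1 = f wt, so z = wt, giving wt three children
              have hzwt : z = wt :=
                hinj hzv (hTends (wt, wa) hwta).1 (hcase.symm.trans hE)
              subst hzwt
              have hwwa : w ≠ wa := by
                intro he; rw [he, hfa] at hfw; exact hF' hfw
              have hwwb : w ≠ wb := by
                intro he; rw [he, hfb] at hfw; exact hF'' hfw
              have hsub3 : ({(z, wa), (z, wb), (z, w)} : Finset (W × W)) ⊆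
                  T.arcs.filter (fun e => e.1 = z) := by
                intro e he
                simp only [Finset.mem_insert, Finset.mem_singleton] at he
                rcases he with rfl | rfl | rfl
                · exact Finset.mem_filter.mpr ⟨hwta, rfl⟩
                · exact Finset.mem_filter.mpr ⟨hwtb, rfl⟩
                · exact Finset.mem_filter.mpr ⟨harcz, rfl⟩
              have hc3 : ({(z, wa), (z, wb), (z, w)} : Finset (W × W)).card = 3 := by
                rw [Finset.card_insert_of_notMem
                    (by simp [Prod.ext_iff, hwab, Ne.symm hwwa]),
                  Finset.card_insert_of_notMem
                    (by simp [Prod.ext_iff, Ne.symm hwwb]),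
                  Finset.card_singleton]
              have hge := Finset.card_le_card hsub3
              rw [hc3] at hge
              have hle : T.outdeg z ≤ 2 := by
                by_cases hwtr : z = T.root
                · exact le_of_eq (hwtr ▸ hTr2)
                · rcases hTclass z hzv hwtr with ⟨_, h2⟩ | ⟨_, h2⟩ | ⟨_, h2⟩ <;>
                    omega
              rw [Net.outdeg] at hle
              omega
            · exact hint (wt, wa) hwta z1 hE z hzv hcase.symm
          · -- z1 = f w lies on the tree path: contradiction with hF
            exact hF (by rw [hcase]; exact hfw)
          · -- z1 internal to P (z, w)
            rcases hE1 with hE | hE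
            · exact hint (z, w) harcz z1 hcase wt (hTends (wt, wa) hwta).1 hE.symm
            · have hne : (z, w) ≠ (wt, wa) := by
                intro he
                have hwwa : w ≠ wa := by
                  intro he'; rw [he', hfa] at hfw; exact hF' hfw
                exact hwwa (congrArg Prod.snd he)
              exact hdisj (z, w) harcz (wt, wa) hwta hne z1 hcase hE
        · -- the whole path P (z, w) lies on the tree path: recurse on z
          have hfz : f z ∈ x :: l := by
            obtain ⟨t, ht⟩ := path_head hPe
            exact hsub (f z) (by rw [ht]; exact List.mem_cons_self)
          have hlen' : q'.length ≤ n := by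
            have hq'len : q.length = q'.length + 1 := by rw [heqq]; simp
            omega
          exact ih z q' hq' hlen' hzv hfz
  -- conclude: the leaf corresponding to ℓ' maps onto the tree path
  obtain ⟨w', hw'leaf, hw'c⟩ := hc.2.2 ℓ' hℓ
  have hfw' : f w' ∈ x :: l := by
    rw [hleaf w' hw'leaf, hw'c]
    have hmem : ℓ' ∈ z1 :: x :: l := path_last_mem htp.1
    rcases List.mem_cons.mp hmem with he | hm
    · exfalso
      have h1 := hℓ.2
      rw [he, hpi.2.2] at h1
      omega
    · exact hm
  obtain ⟨qT, hqT⟩ := reaches_path (hTanc w' hw'leaf.1)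
  exact hK qT.length w' qT hqT le_rfl hw'leaf.1 hfw'
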